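/- Let φ : [−1,1] → ℝ be a non-constant, non-positive, convex, differentiable function. Then for every ρ₀ ∈ (−1,1), 2φ(ρ₀) < −(1 − ρ₀²)·|φ'(ρ₀)|. -/

import Mathlib

open Set

/-- For a non-constant, non-positive, convex, differentiable function `φ` on `[-1,1]`,
`2φ(ρ₀) < -(1-ρ₀²)·|φ'(ρ₀)|` for every interior point `ρ₀`. -/
theorem convex_nonpositive_strict_bound
    (φ φ' : ℝ → ℝ)
    (hconv : ConvexOn ℝ (Icc (-1 : ℝ) 1) φ)
    (hnonpos : ∀ ρ ∈ Icc (-1 : ℝ) 1, φ ρ ≤ 0)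
    (hderiv : ∀ ρ ∈ Ioo (-1 : ℝ) 1, HasDerivAt φ (φ' ρ) ρ)
    (hnonconst : ∃ x ∈ Icc (-1 : ℝ) 1, ∃ y ∈ Icc (-1 : ℝ) 1, φ x ≠ φ y) :
    ∀ ρ₀ ∈ Ioo (-1 : ℝ) 1, 2 * φ ρ₀ < -((1 - ρ₀ ^ 2) * |φ' ρ₀|) := by
  intro ρ₀ hρ₀
  obtain ⟨h1, h2⟩ := hρ₀
  have hρ₀I : ρ₀ ∈ Icc (-1 : ℝ) 1 := ⟨le_of_lt h1, le_of_lt h2⟩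
  have hm1 : (-1 : ℝ) ∈ Icc (-1 : ℝ) 1 := ⟨le_refl _, by norm_num⟩
  have hp1 : (1 : ℝ) ∈ Icc (-1 : ℝ) 1 := ⟨by norm_num, le_refl _⟩
  have hd := hderiv ρ₀ ⟨h1, h2⟩
  have hpos1 : (0 : ℝ) < 1 - ρ₀ := by linarith
  have hpos2 : (0 : ℝ) < ρ₀ - (-1) := by linarith
  -- tangent line inequalities
  have hslope1 : φ' ρ₀ ≤ (φ 1 - φ ρ₀) / (1 - ρ₀) := by
    have := hconv.le_slope_of_hasDerivAt hρ₀I hp1 h2 hd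
    rwa [slope_def_field] at this
  have hslope2 : (φ ρ₀ - φ (-1)) / (ρ₀ - (-1)) ≤ φ' ρ₀ := by
    have := hconv.slope_le_of_hasDerivAt hm1 hρ₀I h1 hd
    rwa [slope_def_field] at this
  have e1 : φ ρ₀ + (1 - ρ₀) * φ' ρ₀ ≤ φ 1 := by
    have := (le_div_iff₀ hpos1).mp hslope1
    linarith
  have e2 : φ ρ₀ - (ρ₀ + 1) * φ' ρ₀ ≤ φ (-1) := by
    have := (div_le_iff₀ hpos2).mp hslope2
    linarith
  have hφ1 : φ 1 ≤ 0 := hnonpos 1 hp1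
  have hφm1 : φ (-1) ≤ 0 := hnonpos (-1) hm1
  -- φ ρ₀ < 0
  have hneg : φ ρ₀ < 0 := by
    rcases lt_or_eq_of_le (hnonpos ρ₀ hρ₀I) with h | h
    · exact h
    exfalso
    -- φ is zero everywhere, contradicting nonconstancy
    have key : ∀ z ∈ Icc (-1 : ℝ) 1, φ z = 0 := by
      intro z hz
      refine le_antisymm (hnonpos z hz) ?_
      by_contra hlt
      push_neg at hlt
      rcases lt_trichotomy z ρ₀ with hzρ | hzρ | hzρ
      · -- ρ₀ between z and 1
        set a : ℝ := (1 - ρ₀) / (1 - z) with ha_def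
        have hzlt1 : z < 1 := lt_of_lt_of_le hzρ (le_of_lt h2)
        have hposz : (0 : ℝ) < 1 - z := by linarith
        have ha0 : 0 < a := div_pos hpos1 hposz
        have ha1 : a ≤ 1 := by
          rw [div_le_one hposz]; linarith
        have hb0 : 0 ≤ 1 - a := by linarith
        have hcomb : a * z + (1 - a) * 1 = ρ₀ := by
          field_simp [ha_def]
          have hmul : a * (1 - z) = 1 - ρ₀ := by rw [ha_def]; exact div_mul_cancel₀ _ hposz.ne'
          linear_combination -hmul
        have := hconv.2 hz hp1 (le_of_lt ha0) hb0 (by ring)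
        simp only [smul_eq_mul] at this
        rw [hcomb] at this
        have : φ ρ₀ ≤ a * φ z + (1 - a) * φ 1 := this
        nlinarith [mul_pos ha0 (neg_pos.mpr hlt)]
      · rw [hzρ, ← h] at hlt; linarith
      · -- ρ₀ between -1 and z
        set a : ℝ := (ρ₀ + 1) / (z + 1) with ha_def
        have hzgt : -1 < z := lt_trans h1 hzρ
        have hposz : (0 : ℝ) < z + 1 := by linarith
        have ha0 : 0 < a := div_pos (by linarith) hposz
        have ha1 : a ≤ 1 := by
          rw [div_le_one hposz]; linarith
        have hb0 : 0 ≤ 1 - a := by linarith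
        have hcomb : a * z + (1 - a) * (-1) = ρ₀ := by
          field_simp [ha_def]
          have hmul : a * (z + 1) = ρ₀ + 1 := by rw [ha_def]; exact div_mul_cancel₀ _ hposz.ne'
          linear_combination hmul
        have := hconv.2 hz hm1 (le_of_lt ha0) hb0 (by ring)
        simp only [smul_eq_mul] at this
        rw [hcomb] at this
        have : φ ρ₀ ≤ a * φ z + (1 - a) * φ (-1) := this
        nlinarith [mul_pos ha0 (neg_pos.mpr hlt)]
    obtain ⟨x, hx, y, hy, hxy⟩ := hnonconst
    exact hxy (by rw [key x hx, key y hy])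
  -- combine
  rcases abs_cases (φ' ρ₀) with ⟨habs, hsign⟩ | ⟨habs, hsign⟩
  · rw [habs]
    nlinarith
  · rw [habs]
    nlinarith
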